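/- Let g > 0 be a constant, let f(s) = a + bs be a linear function on ℝ, and let t ≥ 0. Then ∫₀ᵗ f(s)·exp((s-t)g) ds = (1/g)·f(t - 1/g) - (1/g)·exp(-gt)·f(-1/g). In particular, the one-node quadrature rule ∫₀ᵗ f(s)exp((s-t)g) ds ≈ (1/g)·f(t - 1/g) with node t - 1/g and weight 1/g is exact for all linear functions f up to a term decaying exponentially in t. -/

import Mathlib

/-- The one-node quadrature rule with node `t - 1/g` and weight `1/g` is exact
for linear functions `f(s) = a + b·s` up to an exponentially decaying term:
`∫₀ᵗ f(s)·exp((s-t)g) ds = (1/g)·f(t - 1/g) - (1/g)·exp(-gt)·f(-1/g)`. -/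
theorem dqssa_quadrature_exact_for_linear
    (g a b t : ℝ) (hg : 0 < g) (ht : 0 ≤ t) :
    (∫ s in (0:ℝ)..t, (a + b * s) * Real.exp ((s - t) * g))
      = (1 / g) * (a + b * (t - 1 / g))
        - (1 / g) * Real.exp (-g * t) * (a + b * (-(1 / g))) := by
  have hg' : g ≠ 0 := hg.ne'
  have key : ∀ s : ℝ, HasDerivAt (fun s : ℝ =>
      ((a + b * s) / g - b / g ^ 2) * Real.exp ((s - t) * g))
      ((a + b * s) * Real.exp ((s - t) * g)) s := by
    intro s
    have h1 : HasDerivAt (fun s : ℝ => (a + b * s) / g - b / g ^ 2) (b / g) s := by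
      have := ((hasDerivAt_id s).const_mul b).const_add a
      simpa using (this.div_const g).sub_const (b / g ^ 2)
    have h2 : HasDerivAt (fun s : ℝ => Real.exp ((s - t) * g))
        (Real.exp ((s - t) * g) * g) s := by
      have hl : HasDerivAt (fun s : ℝ => (s - t) * g) g s := by
        simpa using ((hasDerivAt_id s).sub_const t).mul_const g
      exact (Real.hasDerivAt_exp ((s - t) * g)).comp s hl
    have := h1.mul h2
    refine this.congr_deriv ?_
    field_simp
    ring
  have := intervalIntegral.integral_eq_sub_of_hasDerivAt (a := 0) (b := t)
    (fun s _ => key s)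
    (Continuous.intervalIntegrable (by continuity) 0 t)
  rw [this]
  have : (-t) * g = -g * t := by ring
  simp only [zero_sub, this]
  field_simp
  simp only [sub_self, mul_zero, Real.exp_zero]
  ring
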